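/- Let p ≥ 1 be an integer and let L be a ℤ-submodule of ℤ^n (functions Fin n → ℤ) containing p • e_i for every i, where e_i is the i-th standard basis vector. Then L admits a ℤ-basis indexed by Fin n all of whose vectors have nonnegative coordinates; that is, there exists a basis b : Basis (Fin n) ℤ L such that for all a and j, 0 ≤ (b a : Fin n → ℤ) j. -/

import Mathlib

open Submodule Set

private noncomputable def consMapZ (n : ℕ) : (Fin n → ℤ) →ₗ[ℤ] (Fin (n+1) → ℤ) where
  toFun x := Fin.cons 0 x
  map_add' x y := by
    funext j
    refine Fin.cases ?_ (fun i => ?_) j <;> simp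
  map_smul' c x := by
    funext j
    refine Fin.cases ?_ (fun i => ?_) j <;> simp

private theorem aux_nonneg_basis (p : ℕ) (hp : 1 ≤ p) :
    ∀ n (L : Submodule ℤ (Fin n → ℤ)),
      (∀ i : Fin n, (p : ℤ) • Pi.single i (1 : ℤ) ∈ L) →
      ∃ b : Module.Basis (Fin n) ℤ L, ∀ a j, 0 ≤ (b a : Fin n → ℤ) j := by
  intro n
  induction n with
  | zero =>
    intro L _
    exact ⟨Module.Basis.empty _, fun a => a.elim0⟩
  | succ n ih =>
    intro L hL
    -- projection on coordinate 0 and the tail map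
    set π0 : (Fin (n+1) → ℤ) →ₗ[ℤ] ℤ := LinearMap.proj 0 with hπ0
    set tl : (Fin (n+1) → ℤ) →ₗ[ℤ] (Fin n → ℤ) := LinearMap.funLeft ℤ ℤ Fin.succ with htl
    -- the ideal of 0-th coordinates
    set S : Submodule ℤ ℤ := L.map π0 with hS
    have hpS : (p : ℤ) ∈ S := ⟨(p : ℤ) • Pi.single 0 1, hL 0, by simp [hπ0]⟩
    have hSp : (S : Submodule ℤ ℤ).IsPrincipal := inferInstance
    set g : ℤ := Submodule.IsPrincipal.generator S with hg
    have hgS : g ∈ S := Submodule.IsPrincipal.generator_mem S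
    have hgdvd : ∀ x ∈ S, g ∣ x := by
      intro x hx
      rw [← Submodule.IsPrincipal.span_singleton_generator S, Submodule.mem_span_singleton] at hx
      rcases hx with ⟨a, rfl⟩
      exact Dvd.intro a (mul_comm g a)
    have hgne : g ≠ 0 := by
      intro h
      rcases hgdvd _ hpS with ⟨a, ha⟩
      rw [h, zero_mul] at ha
      exact (by positivity : (0:ℤ) < p).ne' ha
    set d : ℤ := |g| with hd
    have hdpos : 0 < d := abs_pos.mpr hgne
    have hdS : d ∈ S := by
      rcases abs_choice g with h | h
      · rw [hd, h]; exact hgS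
      · rw [hd, h]; exact S.neg_mem hgS
    have hdvd : ∀ v ∈ L, d ∣ v 0 := by
      intro v hv
      rw [hd, abs_dvd]
      exact hgdvd _ ⟨v, hv, rfl⟩
    obtain ⟨w, hwL, hw0⟩ : ∃ w ∈ L, w 0 = d := by
      rcases hdS with ⟨w, hw, hw0⟩
      exact ⟨w, hw, hw0⟩
    -- the sublattice of tails of vectors of L with 0 first coordinate
    set L' : Submodule ℤ (Fin n → ℤ) := (L ⊓ LinearMap.ker π0).map tl with hL'
    have hL'p : ∀ i : Fin n, (p : ℤ) • Pi.single i (1 : ℤ) ∈ L' := by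
      intro i
      refine ⟨(p : ℤ) • Pi.single i.succ 1, ⟨hL i.succ, ?_⟩, ?_⟩
      · simp [hπ0, Pi.single_apply, (Fin.succ_ne_zero i)]
      · funext j
        simp [htl, LinearMap.funLeft, Pi.single_apply, Fin.succ_inj]
    obtain ⟨c, hc⟩ := ih L' hL'p
    -- ambient versions of the basis vectors of L'
    set camb : Fin n → (Fin n → ℤ) := fun a => (c a : Fin n → ℤ) with hcamb
    have hcambmem : ∀ a, camb a ∈ L' := fun a => (c a).2
    -- lifted basis vectors
    set chat : Fin n → (Fin (n+1) → ℤ) := fun a => Fin.cons 0 (camb a) with hchat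
    have hchatmem : ∀ a, chat a ∈ L := by
      intro a
      rcases hcambmem a with ⟨v, ⟨hvL, hv0⟩, hvt⟩
      have : chat a = v := by
        have h0 : v 0 = 0 := hv0
        have ht : Fin.tail v = camb a := by
          funext j; exact congrFun hvt j
        show Fin.cons 0 (camb a) = v
        rw [← ht, ← h0]
        exact Fin.cons_self_tail v
      rw [this]; exact hvL
    -- the corrected first basis vector
    set M : ℕ := Finset.univ.sup fun j => (w j).natAbs with hM
    set u : Fin (n+1) → ℤ := ∑ i : Fin n, (p : ℤ) • Pi.single i.succ 1 with hu
    have huL : u ∈ L := Submodule.sum_mem L fun i _ => hL i.succ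
    have hu0 : u 0 = 0 := by
      rw [hu]
      simp [Finset.sum_apply, Pi.single_apply, (Fin.succ_ne_zero _).symm]
    have husucc : ∀ j : Fin n, u j.succ = p := by
      intro j
      rw [hu]
      simp [Finset.sum_apply, Pi.single_apply, Fin.succ_inj, Finset.sum_ite_eq]
    set w' : Fin (n+1) → ℤ := w + (M : ℤ) • u with hw'
    have hw'L : w' ∈ L := L.add_mem hwL (L.smul_mem _ huL)
    have hw'0 : w' 0 = d := by simp [hw', hu0, hw0]
    have hw'succ : ∀ j : Fin n, 0 ≤ w' j.succ := by
      intro j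
      have h1 : (w j.succ).natAbs ≤ M :=
        Finset.le_sup (f := fun j => (w j).natAbs) (Finset.mem_univ j.succ)
      have h2 : (M : ℤ) ≤ (M : ℤ) * p := le_mul_of_one_le_right (by positivity) (by exact_mod_cast hp)
      have h3 : -w j.succ ≤ (M : ℤ) := by
        have habs : |w j.succ| ≤ (M : ℤ) := by
          rw [Int.abs_eq_natAbs]; exact_mod_cast h1
        linarith [neg_le_abs (w j.succ)]
      have : w' j.succ = w j.succ + (M : ℤ) * p := by simp [hw', husucc j, mul_comm]
      rw [this]; linarith
    -- the candidate family in the ambient space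
    set fam : Fin (n+1) → (Fin (n+1) → ℤ) := Fin.cons w' chat with hfam
    have hfammem : ∀ a, fam a ∈ L := by
      intro a
      refine Fin.cases ?_ (fun i => ?_) a
      · rw [hfam, Fin.cons_zero]; exact hw'L
      · rw [hfam, Fin.cons_succ]; exact hchatmem i
    -- linear independence of the ambient family
    have hcambli : LinearIndependent ℤ camb :=
      c.linearIndependent.map' L'.subtype (Submodule.ker_subtype L')
    have hconsker : LinearMap.ker (consMapZ n) = ⊥ := by
      rw [LinearMap.ker_eq_bot]
      intro x y hxy
      have := congrArg Fin.tail hxy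
      simpa [consMapZ, Fin.tail_cons] using this
    have hchatli : LinearIndependent ℤ chat := by
      have : chat = (consMapZ n) ∘ camb := by
        funext a; rfl
      rw [this]
      exact hcambli.map' _ hconsker
    have hchat0 : ∀ a, chat a 0 = 0 := fun a => rfl
    have hkerchat : Submodule.span ℤ (Set.range chat) ≤ LinearMap.ker π0 := by
      rw [Submodule.span_le]
      rintro x ⟨a, rfl⟩
      exact hchat0 a
    have hfamli : LinearIndependent ℤ fam := by
      rw [hfam]
      refine LinearIndependent.fin_cons' w' chat hchatli ?_
      intro k y hymem hky
      have h0 : k • w' 0 + (y : Fin (n+1) → ℤ) 0 = 0 := by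
        have := congrFun hky 0
        simpa using this
      have hy0 : (y : Fin (n+1) → ℤ) 0 = 0 := hkerchat hymem
      rw [hy0, add_zero, hw'0, smul_eq_mul] at h0
      exact (mul_eq_zero.mp h0).resolve_right hdpos.ne'
    -- spanning in the ambient space
    have hspan_camb : Submodule.span ℤ (Set.range camb) = L' := by
      have h1 : Submodule.span ℤ (Set.range camb)
          = Submodule.map L'.subtype (Submodule.span ℤ (Set.range c)) := by
        rw [Submodule.map_span, ← Set.range_comp]
        rfl
      rw [h1, c.span_eq, Submodule.map_subtype_top]
    have hmapL' : Submodule.map (consMapZ n) L' = L ⊓ LinearMap.ker π0 := by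
      apply le_antisymm
      · rintro x ⟨y, hy, rfl⟩
        rcases hy with ⟨v, hv, hvt⟩
        have hxy : consMapZ n y = v := by
          have h0 : v 0 = 0 := hv.2
          have ht : Fin.tail v = y := by funext j; exact congrFun hvt j
          show Fin.cons 0 y = v
          rw [← ht, ← h0]
          exact Fin.cons_self_tail v
        rw [hxy]; exact hv
      · intro v hv
        refine ⟨tl v, ⟨v, hv, rfl⟩, ?_⟩
        have h0 : v 0 = 0 := hv.2
        show Fin.cons 0 (tl v) = v
        rw [← h0]
        exact Fin.cons_self_tail v
    have hspan_chat : Submodule.span ℤ (Set.range chat) = (L ⊓ LinearMap.ker π0) := by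
      have h2 : Submodule.span ℤ (Set.range chat)
          = Submodule.map (consMapZ n) (Submodule.span ℤ (Set.range camb)) := by
        rw [Submodule.map_span, ← Set.range_comp]
        rfl
      rw [h2, hspan_camb, hmapL']
    have hchatsub : Submodule.span ℤ (Set.range chat) ≤ Submodule.span ℤ (Set.range fam) := by
      apply Submodule.span_mono
      rintro x ⟨a, rfl⟩
      exact ⟨a.succ, by rw [hfam, Fin.cons_succ]⟩
    have hspan : Submodule.span ℤ (Set.range fam) = (L : Submodule ℤ (Fin (n+1) → ℤ)) := by
      apply le_antisymm
      · rw [Submodule.span_le]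
        rintro x ⟨a, rfl⟩
        exact hfammem a
      · intro v hv
        have hdv : d ∣ v 0 := hdvd v hv
        set q : ℤ := v 0 / d with hq
        have hqd : v 0 / d * d = v 0 := Int.ediv_mul_cancel hdv
        have hv0' : π0 (v - q • w') = 0 := by
          show v 0 - q • w' 0 = 0
          rw [hw'0, smul_eq_mul, hq, hqd, sub_self]
        have hvmem : v - q • w' ∈ L ⊓ LinearMap.ker π0 :=
          ⟨L.sub_mem hv (L.smul_mem q hw'L), hv0'⟩
        have hvspan : v - q • w' ∈ Submodule.span ℤ (Set.range fam) :=
          hchatsub (hspan_chat.symm ▸ hvmem)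
        have hw'span : w' ∈ Submodule.span ℤ (Set.range fam) :=
          Submodule.subset_span ⟨0, by rw [hfam, Fin.cons_zero]⟩
        have : v = (v - q • w') + q • w' := by ring
        rw [this]
        exact Submodule.add_mem _ hvspan (Submodule.smul_mem _ q hw'span)
    -- assemble the basis inside L
    set famL : Fin (n+1) → L := fun a => ⟨fam a, hfammem a⟩ with hfamL
    have hli : LinearIndependent ℤ famL := by
      apply LinearIndependent.of_comp L.subtype
      exact hfamli
    have hsp : ⊤ ≤ Submodule.span ℤ (Set.range famL) := by
      intro x _
      have hmap : Submodule.map L.subtype (Submodule.span ℤ (Set.range famL))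
          = Submodule.span ℤ (Set.range fam) := by
        rw [Submodule.map_span, ← Set.range_comp]
        rfl
      have hx : (x : Fin (n+1) → ℤ) ∈ Submodule.span ℤ (Set.range fam) := hspan.symm ▸ x.2
      rw [← hmap] at hx
      rcases hx with ⟨y, hy, hyx⟩
      have hyxx : y = x := Subtype.ext hyx
      rwa [hyxx] at hy
    refine ⟨Module.Basis.mk hli hsp, ?_⟩
    intro a j
    have hba : ((Module.Basis.mk hli hsp) a : Fin (n+1) → ℤ) = fam a := by
      rw [Module.Basis.mk_apply]
    rw [hba]
    refine Fin.cases ?_ (fun i => ?_) a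
    · have hfa : fam 0 = w' := by rw [hfam, Fin.cons_zero]
      rw [hfa]
      refine Fin.cases ?_ (fun j' => ?_) j
      · rw [hw'0]; exact hdpos.le
      · exact hw'succ j'
    · have hfa : fam i.succ = chat i := by rw [hfam, Fin.cons_succ]
      rw [hfa]
      refine Fin.cases ?_ (fun j' => ?_) j
      · exact le_of_eq (hchat0 i).symm
      · have hcc : chat i j'.succ = camb i j' := by
          show (Fin.cons 0 (camb i) : Fin (n+1) → ℤ) j'.succ = camb i j'
          simp
        rw [hcc]
        exact hc i j'

/-- Every `ℤ`-sublattice of `ℤ^n` containing all the pure-power vectors `p • e_i`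
(`p ≥ 1`) admits a `ℤ`-basis indexed by `Fin n` all of whose vectors have nonnegative
coordinates. -/
theorem exists_nonneg_basis (p : ℕ) (hp : 1 ≤ p) (n : ℕ)
    (L : Submodule ℤ (Fin n → ℤ))
    (hL : ∀ i : Fin n, (p : ℤ) • Pi.single i (1 : ℤ) ∈ L) :
    ∃ b : Module.Basis (Fin n) ℤ L, ∀ (a : Fin n) (j : Fin n), 0 ≤ (b a : Fin n → ℤ) j :=
  aux_nonneg_basis p hp n L hL
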